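/- Let g₁, g₂ be positive integers with g₂/2 < g₁ < g₂ and let S be a numerical semigroup with E(S) = {g₁, g₂}. Then there exist irreducible numerical semigroups S₁ and S₂ with Frobenius numbers g₁ and g₂ respectively such that S = S₁ ∩ S₂. -/

import Mathlib

/-- A numerical semigroup: subset of ℕ closed under addition, containing 0, cofinite. -/
def IsNumericalSemigroup (S : Set ℕ) : Prop :=
  0 ∈ S ∧ (∀ a b, a ∈ S → b ∈ S → a + b ∈ S) ∧ Sᶜ.Finite

/-- The set of special gaps E(S). -/
def specialGaps (S : Set ℕ) : Set ℕ :=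
  {x | x ∉ S ∧ 2 * x ∈ S ∧ ∀ s ∈ S, s ≠ 0 → x + s ∈ S}

/-- `F` is the Frobenius number of `S`: the greatest natural number not in `S`. -/
def IsFrobenius (S : Set ℕ) (F : ℕ) : Prop :=
  F ∉ S ∧ ∀ m : ℕ, m ∉ S → m ≤ F

/-- Irreducible numerical semigroup. -/
def IsIrreducibleNS (S : Set ℕ) : Prop :=
  IsNumericalSemigroup S ∧ ∀ S₁ S₂ : Set ℕ, IsNumericalSemigroup S₁ →
    IsNumericalSemigroup S₂ → S = S₁ ∩ S₂ → S = S₁ ∨ S = S₂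

/-- Atomic numerical semigroup. -/
def IsAtomicNS (S : Set ℕ) : Prop :=
  IsNumericalSemigroup S ∧ ∀ (F : ℕ) (S₁ S₂ : Set ℕ), IsFrobenius S F →
    IsNumericalSemigroup S₁ → IsNumericalSemigroup S₂ →
    IsFrobenius S₁ F → IsFrobenius S₂ F → S = S₁ ∩ S₂ → S = S₁ ∨ S = S₂

/-- Pseudo-Frobenius numbers of `S`, as integers. -/
def pseudoFrob (S : Set ℕ) : Set ℤ :=
  {x | x ∉ (fun n : ℕ => (n : ℤ)) '' S ∧
    ∀ s ∈ S, s ≠ 0 → x + (s : ℤ) ∈ (fun n : ℕ => (n : ℤ)) '' S}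

/-- The semigroup C(F): 0 together with all naturals greater than F/2, except F. -/
def NSC (F : ℕ) : Set ℕ := insert 0 ({n : ℕ | F / 2 < n} \ {F})

/-- `x` is a minimal generator of `S`. -/
def IsMinGen (S : Set ℕ) (x : ℕ) : Prop :=
  x ∈ S ∧ x ≠ 0 ∧ ∀ a b, a ∈ S → b ∈ S → a ≠ 0 → b ≠ 0 → a + b ≠ x

lemma ns_inter {A B : Set ℕ} (hA : IsNumericalSemigroup A) (hB : IsNumericalSemigroup B) :
    IsNumericalSemigroup (A ∩ B) := by
  refine ⟨⟨hA.1, hB.1⟩, fun a b ha hb => ⟨hA.2.1 a b ha.1 hb.1, hB.2.1 a b ha.2 hb.2⟩, ?_⟩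
  rw [Set.compl_inter]
  exact hA.2.2.union hB.2.2

lemma maxgap_special {S A : Set ℕ} (hS : IsNumericalSemigroup S)
    (hA : IsNumericalSemigroup A) (hSA : S ⊆ A) (hne : ¬ A ⊆ S) :
    ∃ x ∈ specialGaps S, x ∈ A := by
  have hfin : (A \ S).Finite := hS.2.2.subset (fun x hx => hx.2)
  have hnon : (A \ S).Nonempty := by
    rcases Set.not_subset.mp hne with ⟨x, hxA, hxS⟩; exact ⟨x, hxA, hxS⟩
  obtain ⟨x, hxD, hmax⟩ := Set.Finite.exists_maximalFor id _ hfin hnon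
  simp only [id] at hmax
  have hx0 : x ≠ 0 := fun h => hxD.2 (h ▸ hS.1)
  refine ⟨x, ⟨hxD.2, ?_, ?_⟩, hxD.1⟩
  · by_contra h2
    have hmem : 2 * x ∈ A \ S := ⟨by rw [two_mul]; exact hA.2.1 x x hxD.1 hxD.1, h2⟩
    have := hmax hmem (by omega)
    omega
  · intro s hsS hs0
    by_contra hns
    have hmem : x + s ∈ A \ S := ⟨hA.2.1 x s hxD.1 (hSA hsS), hns⟩
    have := hmax hmem (by omega)
    omega

lemma irreducible_of_specialGaps {S : Set ℕ} (hS : IsNumericalSemigroup S) {g : ℕ}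
    (hg : g ∉ S) (hsp : specialGaps S ⊆ {g}) : IsIrreducibleNS S := by
  refine ⟨hS, fun A B hA hB hEq => ?_⟩
  by_contra hcon
  push_neg at hcon
  have hSA : ¬ A ⊆ S := by
    intro h
    exact hcon.1 (Set.Subset.antisymm (hEq ▸ Set.inter_subset_left) h)
  have hSB : ¬ B ⊆ S := by
    intro h
    exact hcon.2 (Set.Subset.antisymm (hEq ▸ Set.inter_subset_right) h)
  obtain ⟨x, hx, hxA⟩ := maxgap_special hS hA (le_of_eq hEq |>.trans Set.inter_subset_left) hSA
  obtain ⟨y, hy, hyB⟩ := maxgap_special hS hB (le_of_eq hEq |>.trans Set.inter_subset_right) hSB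
  have hxg : x = g := hsp hx
  have hyg : y = g := hsp hy
  have : g ∈ S := hEq ▸ ⟨hxg ▸ hxA, hyg ▸ hyB⟩
  exact hg this

lemma adjoin_ns {S : Set ℕ} (hS : IsNumericalSemigroup S) {x : ℕ} (hx : x ∈ specialGaps S) :
    IsNumericalSemigroup (insert x S) := by
  obtain ⟨hxS, h2x, hadd⟩ := hx
  refine ⟨Set.mem_insert_of_mem _ hS.1, ?_, hS.2.2.subset (by intro a ha; simp only [Set.mem_compl_iff, Set.mem_insert_iff] at *; tauto)⟩
  rintro a b (rfl | ha) (rfl | hb)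
  · exact Set.mem_insert_of_mem _ (by rw [← two_mul]; exact h2x)
  · rcases eq_or_ne b 0 with rfl | hb0
    · simp
    · exact Set.mem_insert_of_mem _ (hadd b hb hb0)
  · rcases eq_or_ne a 0 with rfl | ha0
    · simp
    · exact Set.mem_insert_of_mem _ (by rw [add_comm]; exact hadd a ha ha0)
  · exact Set.mem_insert_of_mem _ (hS.2.1 a b ha hb)

lemma exists_irred (g : ℕ) : ∀ n, ∀ T : Set ℕ, IsNumericalSemigroup T → IsFrobenius T g →
    Tᶜ.ncard ≤ n → ∃ S', IsIrreducibleNS S' ∧ IsFrobenius S' g ∧ T ⊆ S' := by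
  intro n
  induction n with
  | zero =>
    intro T hT hF hcard
    exfalso
    have : Tᶜ = ∅ := (Set.ncard_eq_zero hT.2.2).mp (le_antisymm hcard (Nat.zero_le _))
    exact (Set.eq_empty_iff_forall_notMem.mp this g) hF.1
  | succ n ih =>
    intro T hT hF hcard
    by_cases hsp : specialGaps T ⊆ {g}
    · exact ⟨T, irreducible_of_specialGaps hT hF.1 hsp, hF, subset_rfl⟩
    · rw [Set.not_subset] at hsp
      obtain ⟨x, hx, hxg⟩ := hsp
      simp only [Set.mem_singleton_iff] at hxg
      have hT' := adjoin_ns hT hx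
      have hF' : IsFrobenius (insert x T) g := by
        refine ⟨by simp [hF.1, Ne.symm hxg], fun m hm => hF.2 m (fun h => hm (Set.mem_insert_of_mem _ h))⟩
      have hcompl : (insert x T)ᶜ = Tᶜ \ {x} := by
        ext a; simp [Set.mem_insert_iff]; tauto
      have hss : (insert x T)ᶜ ⊂ Tᶜ := by
        rw [hcompl]
        exact ⟨Set.diff_subset, fun h => (h (show x ∈ Tᶜ from hx.1)).2 rfl⟩
      have hcard' : (insert x T)ᶜ.ncard ≤ n := by
        have := Set.ncard_lt_ncard hss hT.2.2
        omega
      obtain ⟨S', h1, h2, h3⟩ := ih (insert x T) hT' hF' hcard'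
      exact ⟨S', h1, h2, (Set.subset_insert _ _).trans h3⟩

theorem stmt12 (g₁ g₂ : ℕ) (h0 : 0 < g₁) (h1 : g₂ < 2 * g₁) (h2 : g₁ < g₂)
    (S : Set ℕ) (hS : IsNumericalSemigroup S) (hE : specialGaps S = {g₁, g₂}) :
    ∃ S₁ S₂ : Set ℕ, IsIrreducibleNS S₁ ∧ IsFrobenius S₁ g₁ ∧
      IsIrreducibleNS S₂ ∧ IsFrobenius S₂ g₂ ∧ S = S₁ ∩ S₂ := by
  have hg1S : g₁ ∉ S := by
    have : g₁ ∈ specialGaps S := by rw [hE]; exact Set.mem_insert _ _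
    exact this.1
  have hg2S : g₂ ∉ S := by
    have : g₂ ∈ specialGaps S := by rw [hE]; exact Set.mem_insert_of_mem _ rfl
    exact this.1
  -- S has Frobenius number g₂
  have hFS : IsFrobenius S g₂ := by
    refine ⟨hg2S, ?_⟩
    have hfin : Sᶜ.Finite := hS.2.2
    obtain ⟨M, hM, hmax⟩ := Set.Finite.exists_maximalFor id _ hfin ⟨g₂, hg2S⟩
    simp only [id] at hmax
    have hM0 : M ≠ 0 := fun h => hM (h ▸ hS.1)
    have hMsp : M ∈ specialGaps S := by
      refine ⟨hM, ?_, ?_⟩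
      · by_contra h2
        have := hmax h2 (by omega); omega
      · intro s hsS hs0
        by_contra hns
        have := hmax hns (by omega); omega
    rw [hE] at hMsp
    have hg2M : g₂ ≤ M := by
      by_contra h
      have := hmax hg2S (by omega); omega
    have hMg2 : M = g₂ := by
      rcases hMsp with rfl | rfl
      · omega
      · rfl
    intro m hm
    rcases le_or_gt m M with h | h
    · omega
    · have := hmax hm (by omega); omega
  -- T₁ = S ∪ (g₁, ∞)
  set T₁ : Set ℕ := S ∪ {m | g₁ < m} with hT₁def
  have hT₁ : IsNumericalSemigroup T₁ := by
    refine ⟨Or.inl hS.1, ?_, ?_⟩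
    · rintro a b (ha | ha) (hb | hb)
      · exact Or.inl (hS.2.1 a b ha hb)
      · right; simp only [Set.mem_setOf_eq] at *; omega
      · right; simp only [Set.mem_setOf_eq] at *; omega
      · right; simp only [Set.mem_setOf_eq] at *; omega
    · apply Set.Finite.subset (Set.finite_Iic g₁)
      intro a ha
      simp only [hT₁def, Set.mem_compl_iff, Set.mem_union, Set.mem_setOf_eq, not_or, not_lt] at ha
      exact ha.2
  have hFT₁ : IsFrobenius T₁ g₁ := by
    constructor
    · rintro (h | h)
      · exact hg1S h
      · simp only [Set.mem_setOf_eq] at h; omega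
    · intro m hm
      simp only [hT₁def, Set.mem_union, Set.mem_setOf_eq, not_or, not_lt] at hm
      exact hm.2
  obtain ⟨S₁, hS₁irr, hS₁F, hS₁sub⟩ := exists_irred g₁ T₁ᶜ.ncard T₁ hT₁ hFT₁ le_rfl
  obtain ⟨S₂, hS₂irr, hS₂F, hS₂sub⟩ := exists_irred g₂ Sᶜ.ncard S hS hFS le_rfl
  refine ⟨S₁, S₂, hS₁irr, hS₁F, hS₂irr, hS₂F, ?_⟩
  have hsub : S ⊆ S₁ ∩ S₂ := fun x hx => ⟨hS₁sub (Or.inl hx), hS₂sub hx⟩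
  refine Set.Subset.antisymm hsub ?_
  by_contra hne
  obtain ⟨x, hx, hxA⟩ := maxgap_special hS (ns_inter hS₁irr.1 hS₂irr.1) hsub hne
  rw [hE] at hx
  rcases hx with rfl | rfl
  · exact hS₁F.1 hxA.1
  · exact hS₂F.1 hxA.2
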